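/- (Discrete Hardy inequality, first form.) Let α > 0 and 0 < q, h ≤ ∞. There is a constant c = c(α,q,h) such that for every sequence (b_r)_{r∈ℤ} of complex numbers, ( ∑_{k=-∞}^{∞} ( 2^{-αk} ( ∑_{r=-∞}^{k} |b_r|^h )^{1/h} )^q )^{1/q} ≤ c ( ∑_{k=-∞}^{∞} ( 2^{-αk} |b_k| )^q )^{1/q}, with the usual replacement of sums in the exponent-q (resp. exponent-h) position by suprema when q = ∞ (resp. h = ∞). -/

import Mathlib

open ENNReal

/-- The `ℓ_h`-sum `(∑_{r ≤ k} |b_r|^h)^{1/h}`, with the supremum for `h = ∞`. -/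
noncomputable def tailLe (h : ℝ≥0∞) (b : ℤ → ℂ) (k : ℤ) : ℝ≥0∞ :=
  if h = ∞ then ⨆ (r : ℤ) (_ : r ≤ k), ENNReal.ofReal ‖b r‖
  else (∑' r : {r : ℤ // r ≤ k}, (ENNReal.ofReal ‖b r.1‖) ^ h.toReal) ^ (1 / h.toReal)

/-- The weighted `ℓ_q`-norm `(∑_k (2^{-αk} c_k)^q)^{1/q}`, with the supremum for `q = ∞`. -/
noncomputable def wNormNeg (α : ℝ) (q : ℝ≥0∞) (c : ℤ → ℝ≥0∞) : ℝ≥0∞ :=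
  if q = ∞ then ⨆ k : ℤ, (2:ℝ≥0∞) ^ (-(α * (k:ℝ))) * c k
  else (∑' k : ℤ, ((2:ℝ≥0∞) ^ (-(α * (k:ℝ))) * c k) ^ q.toReal) ^ (1 / q.toReal)

namespace DiscreteHardyAux

/-- For `m ≥ 1`, `∑ f i ^ m ≤ (∑ f i) ^ m`. -/
lemma tsum_rpow_le_rpow_tsum {ι : Type*} (f : ι → ℝ≥0∞) {m : ℝ} (hm : 1 ≤ m) :
    ∑' i, f i ^ m ≤ (∑' i, f i) ^ m := by
  have hm0 : (0:ℝ) ≤ m - 1 := by linarith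
  have hsplit : ∀ x : ℝ≥0∞, x ^ m = x * x ^ (m - 1) := by
    intro x
    rw [show m = 1 + (m - 1) by ring, ENNReal.rpow_add_of_nonneg _ _ zero_le_one hm0,
      ENNReal.rpow_one]
    ring_nf
  calc ∑' i, f i ^ m ≤ ∑' i, f i * (∑' i, f i) ^ (m - 1) := by
        refine ENNReal.tsum_le_tsum fun i => ?_
        rw [hsplit (f i)]
        exact mul_le_mul_right (ENNReal.rpow_le_rpow (ENNReal.le_tsum i) hm0) _
    _ = (∑' i, f i) * (∑' i, f i) ^ (m - 1) := ENNReal.tsum_mul_right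
    _ = (∑' i, f i) ^ m := (hsplit _).symm

/-- Monotonicity of `ℓ_s`-norms: `‖f‖_{ℓ_s} ≤ ‖f‖_{ℓ_t}` for `t ≤ s`. -/
lemma lp_mono {ι : Type*} (f : ι → ℝ≥0∞) {t s : ℝ} (ht : 0 < t) (hts : t ≤ s) :
    (∑' i, f i ^ s) ^ (1/s) ≤ (∑' i, f i ^ t) ^ (1/t) := by
  have hs : 0 < s := ht.trans_le hts
  have h1 : ∀ i, f i ^ s = (f i ^ t) ^ (s/t) := fun i => by
    rw [← ENNReal.rpow_mul]
    congr 1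
    field_simp
  have h2 : ∑' i, f i ^ s ≤ (∑' i, f i ^ t) ^ (s/t) := by
    simp_rw [h1]
    exact tsum_rpow_le_rpow_tsum _ ((one_le_div ht).2 hts)
  calc (∑' i, f i ^ s) ^ (1/s) ≤ ((∑' i, f i ^ t) ^ (s/t)) ^ (1/s) :=
        ENNReal.rpow_le_rpow h2 (by positivity)
    _ = (∑' i, f i ^ t) ^ (1/t) := by
        rw [← ENNReal.rpow_mul]
        congr 1
        field_simp

/-- Jensen-type inequality for weighted tsums in `ℝ≥0∞`. -/
lemma jensen_tsum {ι : Type*} (w f : ι → ℝ≥0∞) {p : ℝ} (hp : 1 ≤ p) :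
    (∑' i, w i * f i) ^ p ≤ (∑' i, w i) ^ (p - 1) * ∑' i, w i * f i ^ p := by
  have hp0 : (0:ℝ) < p := lt_of_lt_of_le one_pos hp
  have he1 : (0:ℝ) ≤ 1 - p⁻¹ := by
    have : p⁻¹ ≤ 1 := inv_le_one_of_one_le₀ hp
    linarith
  have key : ∑' i, w i * f i ≤ (∑' i, w i) ^ (1 - p⁻¹) * (∑' i, w i * f i ^ p) ^ p⁻¹ := by
    rw [ENNReal.tsum_eq_iSup_sum]
    refine iSup_le fun s => ?_
    refine (ENNReal.inner_le_weight_mul_Lp_of_nonneg s hp w f).trans ?_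
    exact mul_le_mul' (ENNReal.rpow_le_rpow (ENNReal.sum_le_tsum s) he1)
      (ENNReal.rpow_le_rpow (ENNReal.sum_le_tsum s) (by positivity))
  calc (∑' i, w i * f i) ^ p
      ≤ ((∑' i, w i) ^ (1 - p⁻¹) * (∑' i, w i * f i ^ p) ^ p⁻¹) ^ p :=
        ENNReal.rpow_le_rpow key hp0.le
    _ = (∑' i, w i) ^ (p - 1) * ∑' i, w i * f i ^ p := by
        rw [ENNReal.mul_rpow_of_nonneg _ _ hp0.le, ← ENNReal.rpow_mul, ← ENNReal.rpow_mul,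
          sub_mul, one_mul, inv_mul_cancel₀ hp0.ne', ENNReal.rpow_one]

/-- The equivalence `ℕ ≃ {r : ℤ // r ≤ k}`, `j ↦ k - j`. -/
def tailEquiv (k : ℤ) : ℕ ≃ {r : ℤ // r ≤ k} where
  toFun j := ⟨k - j, by omega⟩
  invFun r := (k - r.1).toNat
  left_inv j := by simp
  right_inv r := by
    have := r.2
    exact Subtype.ext (by simp; omega)

end DiscreteHardyAux

open DiscreteHardyAux in
/-- discrete Hardy inequality, first form. For `α > 0`,
`0 < q, h ≤ ∞`, there is `c = c(α,q,h)` such that for every sequence `b : ℤ → ℂ`,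
`(∑_k (2^{-αk} (∑_{r ≤ k} |b_r|^h)^{1/h})^q)^{1/q} ≤ c (∑_k (2^{-αk}|b_k|)^q)^{1/q}`,
with sums replaced by suprema when the corresponding exponent is `∞`. -/
theorem discrete_hardy_first (α : ℝ) (q h : ℝ≥0∞) (hα : 0 < α) (hq : 0 < q) (hh : 0 < h) :
    ∃ c : ℝ≥0∞, 0 < c ∧ c < ∞ ∧ ∀ b : ℤ → ℂ,
      wNormNeg α q (fun k => tailLe h b k) ≤
        c * wNormNeg α q (fun k => ENNReal.ofReal ‖b k‖) := by
  classical
  set Q : ℝ := if q = ∞ then 1 else q.toReal with hQdef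
  set H : ℝ := if h = ∞ then 1 else h.toReal with hHdef
  have hQ0 : 0 < Q := by
    rw [hQdef]; split
    · exact one_pos
    · exact ENNReal.toReal_pos hq.ne' ‹_›
  have hH0 : 0 < H := by
    rw [hHdef]; split
    · exact one_pos
    · exact ENNReal.toReal_pos hh.ne' ‹_›
  set t : ℝ := min 1 (min Q H) with htdef
  have ht0 : 0 < t := lt_min one_pos (lt_min hQ0 hH0)
  have htQ : t ≤ Q := le_trans (min_le_right _ _) (min_le_left _ _)
  have htH : t ≤ H := le_trans (min_le_right _ _) (min_le_right _ _)
  set ε : ℝ := α * t with hεdef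
  have hε : 0 < ε := mul_pos hα ht0
  set C : ℝ≥0∞ := ∑' j : ℕ, (2:ℝ≥0∞) ^ (-(ε * j)) with hCdef
  have hr1 : (2:ℝ≥0∞) ^ (-ε) < 1 :=
    ENNReal.rpow_lt_one_of_one_lt_of_neg one_lt_two (by linarith)
  have hCeq : C = (1 - (2:ℝ≥0∞) ^ (-ε))⁻¹ := by
    rw [hCdef, ← ENNReal.tsum_geometric]
    refine tsum_congr fun j => ?_
    rw [← ENNReal.rpow_natCast ((2:ℝ≥0∞) ^ (-ε)) j, ← ENNReal.rpow_mul]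
    congr 1
    ring
  have hC1 : 1 ≤ C := by
    have := ENNReal.le_tsum (f := fun j : ℕ => (2:ℝ≥0∞) ^ (-(ε * (j:ℕ)))) 0
    simpa using this
  have hC0 : C ≠ 0 := by
    intro hc; rw [hc] at hC1; exact (not_le.2 zero_lt_one) hC1
  have hCtop : C ≠ ∞ := by
    rw [hCeq, Ne, ENNReal.inv_eq_top]
    exact (tsub_pos_of_lt hr1).ne'
  refine ⟨C ^ (1/t), ENNReal.rpow_pos (zero_lt_one.trans_le hC1) hCtop,
    ENNReal.rpow_lt_top_of_nonneg (by positivity) hCtop, fun b => ?_⟩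
  set a : ℤ → ℝ≥0∞ := fun r => ENNReal.ofReal ‖b r‖ with ha
  set w : ℤ → ℝ≥0∞ := fun k => (2:ℝ≥0∞) ^ (-(α * (k:ℝ))) with hwdef
  set u : ℤ → ℝ≥0∞ := fun m => (w m * a m) ^ t with hudef
  -- Step A: pointwise bound on tailLe by the ℓ_t tail sum
  have tail_le : ∀ k : ℤ, tailLe h b k ≤ (∑' r : {r : ℤ // r ≤ k}, a r.1 ^ t) ^ (1/t) := by
    intro k
    rw [tailLe]
    split_ifs with hhtop
    · refine iSup₂_le fun r hr => ?_
      have h1 : ENNReal.ofReal ‖b r‖ = (a r ^ t) ^ (1/t) := by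
        rw [← ENNReal.rpow_mul, mul_one_div_cancel ht0.ne', ENNReal.rpow_one, ha]
      rw [h1]
      exact ENNReal.rpow_le_rpow
        (ENNReal.le_tsum (f := fun r : {r : ℤ // r ≤ k} => a r.1 ^ t) ⟨r, hr⟩) (by positivity)
    · have hH' : H = h.toReal := by rw [hHdef, if_neg hhtop]
      exact lp_mono (fun r : {r : ℤ // r ≤ k} => a r.1) ht0 (htH.trans_eq hH')
  -- Step B: key pointwise estimate after raising to power t
  have step1 : ∀ k : ℤ, (w k * tailLe h b k) ^ t ≤
      ∑' j : ℕ, (2:ℝ≥0∞) ^ (-(ε * j)) * u (k - j) := by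
    intro k
    have h1 : (w k * tailLe h b k) ^ t ≤ w k ^ t * ∑' r : {r : ℤ // r ≤ k}, a r.1 ^ t := by
      rw [ENNReal.mul_rpow_of_nonneg _ _ ht0.le]
      refine mul_le_mul_right ?_ _
      calc tailLe h b k ^ t ≤ ((∑' r : {r : ℤ // r ≤ k}, a r.1 ^ t) ^ (1/t)) ^ t :=
            ENNReal.rpow_le_rpow (tail_le k) ht0.le
        _ = ∑' r : {r : ℤ // r ≤ k}, a r.1 ^ t := by
            rw [← ENNReal.rpow_mul, one_div_mul_cancel ht0.ne', ENNReal.rpow_one]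
    refine h1.trans ?_
    rw [← ENNReal.tsum_mul_left]
    rw [← Equiv.tsum_eq (tailEquiv k) (fun r : {r : ℤ // r ≤ k} => w k ^ t * a r.1 ^ t)]
    refine le_of_eq (tsum_congr fun j => ?_)
    show w k ^ t * a (k - (j:ℤ)) ^ t = (2:ℝ≥0∞) ^ (-(ε * j)) * u (k - j)
    rw [hudef]
    show w k ^ t * a (k - (j:ℤ)) ^ t
      = (2:ℝ≥0∞) ^ (-(ε * j)) * (w (k - (j:ℤ)) * a (k - (j:ℤ))) ^ t
    rw [ENNReal.mul_rpow_of_nonneg _ _ ht0.le, ← mul_assoc]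
    congr 1
    show ((2:ℝ≥0∞) ^ (-(α * (k:ℝ)))) ^ t
      = (2:ℝ≥0∞) ^ (-(ε * j)) * ((2:ℝ≥0∞) ^ (-(α * ((k - (j:ℤ) : ℤ):ℝ)))) ^ t
    rw [← ENNReal.rpow_mul, ← ENNReal.rpow_mul,
      ← ENNReal.rpow_add _ _ two_ne_zero ENNReal.ofNat_ne_top]
    congr 1
    rw [hεdef]
    push_cast
    ring
  -- Final case split on q
  by_cases hqtop : q = ∞
  · simp only [wNormNeg, if_pos hqtop]
    have hM : ∀ m : ℤ, w m * a m ≤ ⨆ k : ℤ, w k * a k := fun m => le_iSup (fun k => w k * a k) m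
    refine iSup_le fun k => ?_
    have h2 : (w k * tailLe h b k) ^ t ≤ C * (⨆ k : ℤ, w k * a k) ^ t := by
      refine (step1 k).trans ?_
      calc ∑' j : ℕ, (2:ℝ≥0∞) ^ (-(ε * j)) * u (k - j)
          ≤ ∑' j : ℕ, (2:ℝ≥0∞) ^ (-(ε * j)) * (⨆ k : ℤ, w k * a k) ^ t := by
            refine ENNReal.tsum_le_tsum fun j => mul_le_mul_right ?_ _
            exact ENNReal.rpow_le_rpow (hM _) ht0.le
        _ = C * (⨆ k : ℤ, w k * a k) ^ t := by rw [ENNReal.tsum_mul_right, ← hCdef]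
    calc w k * tailLe h b k = ((w k * tailLe h b k) ^ t) ^ (1/t) := by
          rw [← ENNReal.rpow_mul, mul_one_div_cancel ht0.ne', ENNReal.rpow_one]
      _ ≤ (C * (⨆ k : ℤ, w k * a k) ^ t) ^ (1/t) := ENNReal.rpow_le_rpow h2 (by positivity)
      _ = C ^ (1/t) * ⨆ k : ℤ, w k * a k := by
          rw [ENNReal.mul_rpow_of_nonneg _ _ (by positivity), ← ENNReal.rpow_mul,
            mul_one_div_cancel ht0.ne', ENNReal.rpow_one]
  · simp only [wNormNeg, if_neg hqtop]
    have hQeq : Q = q.toReal := by rw [hQdef, if_neg hqtop]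
    have hQtop0 : 0 < q.toReal := hQeq ▸ hQ0
    set p : ℝ := Q / t with hpdef
    have hp1 : 1 ≤ p := (one_le_div ht0).2 htQ
    have htp : t * p = q.toReal := by
      rw [hpdef, ← hQeq]; field_simp
    have key : ∑' k : ℤ, (w k * tailLe h b k) ^ q.toReal
        ≤ C ^ p * ∑' k : ℤ, (w k * a k) ^ q.toReal := by
      have e1 : ∀ k : ℤ, (w k * tailLe h b k) ^ q.toReal ≤
          C ^ (p - 1) * ∑' j : ℕ, (2:ℝ≥0∞) ^ (-(ε * j)) * u (k - j) ^ p := by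
        intro k
        have heq : (w k * tailLe h b k) ^ q.toReal = ((w k * tailLe h b k) ^ t) ^ p := by
          rw [← ENNReal.rpow_mul, htp]
        rw [heq]
        refine le_trans (ENNReal.rpow_le_rpow (step1 k) (by positivity)) ?_
        have := jensen_tsum (fun j : ℕ => (2:ℝ≥0∞) ^ (-(ε * j))) (fun j : ℕ => u (k - j)) hp1
        simpa [← hCdef] using this
      calc ∑' k : ℤ, (w k * tailLe h b k) ^ q.toReal
          ≤ ∑' k : ℤ, C ^ (p - 1) * ∑' j : ℕ, (2:ℝ≥0∞) ^ (-(ε * j)) * u (k - j) ^ p :=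
            ENNReal.tsum_le_tsum e1
        _ = C ^ (p - 1) * ∑' k : ℤ, ∑' j : ℕ, (2:ℝ≥0∞) ^ (-(ε * j)) * u (k - j) ^ p :=
            ENNReal.tsum_mul_left
        _ = C ^ (p - 1) * ∑' j : ℕ, ∑' k : ℤ, (2:ℝ≥0∞) ^ (-(ε * j)) * u (k - j) ^ p := by
            rw [ENNReal.tsum_comm]
        _ = C ^ (p - 1) * ∑' j : ℕ, (2:ℝ≥0∞) ^ (-(ε * j)) * ∑' k : ℤ, u (k - j) ^ p := by
            congr 1
            exact tsum_congr fun j => ENNReal.tsum_mul_left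
        _ = C ^ (p - 1) * ∑' j : ℕ, (2:ℝ≥0∞) ^ (-(ε * j)) * ∑' k : ℤ, u k ^ p := by
            congr 1
            refine tsum_congr fun j => ?_
            congr 1
            exact Equiv.tsum_eq (Equiv.subRight (j:ℤ)) (fun k => u k ^ p)
        _ = C ^ (p - 1) * (C * ∑' k : ℤ, u k ^ p) := by
            rw [ENNReal.tsum_mul_right, ← hCdef]
        _ = C ^ p * ∑' k : ℤ, (w k * a k) ^ q.toReal := by
            rw [← mul_assoc]
            congr 1
            · nth_rewrite 2 [← ENNReal.rpow_one C]
              rw [← ENNReal.rpow_add _ _ hC0 hCtop]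
              congr 1
              ring
            · refine tsum_congr fun k => ?_
              rw [hudef]
              show ((w k * a k) ^ t) ^ p = (w k * a k) ^ q.toReal
              rw [← ENNReal.rpow_mul, htp]
    refine le_trans (ENNReal.rpow_le_rpow key (by positivity)) ?_
    rw [ENNReal.mul_rpow_of_nonneg _ _ (by positivity), ← ENNReal.rpow_mul]
    have hpq : p * (1 / q.toReal) = 1 / t := by
      rw [hpdef, hQeq]; field_simp
    rw [hpq]
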